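/- arXiv:1710.04441 — 3 statements merged into one kernel-verified Lean document; each statement's English description precedes it below -/
import Mathlib

section
/- Let A_{-1}=0, A_0=1, and let a_1, a_2, ... be arbitrary real numbers. Define A_N recursively by A_N = (1/N)·∑_{n=1}^{N} a_n·A_{N-n}. Then for all N ≥ 1, A_N − A_{N-1} = (1/N)·∑_{n=1}^{N} (a_n − 1)·(A_{N-n} − A_{N-n-1}). -/
/-- Difference identity for the recursively defined sequence
`A_N = (1/N) ∑_{n=1}^N a_n A_{N-n}` with `A_{-1} = 0`, `A_0 = 1`. -/
theorem stmt_0 (a : ℕ → ℝ) (A : ℤ → ℝ)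
    (hAneg : A (-1) = 0) (hA0 : A 0 = 1)
    (hrec : ∀ N : ℕ, 1 ≤ N →
      A N = (1 / (N : ℝ)) * ∑ n ∈ Finset.Icc 1 N, a n * A ((N : ℤ) - n)) :
    ∀ N : ℕ, 1 ≤ N →
      A N - A ((N : ℤ) - 1) =
        (1 / (N : ℝ)) * ∑ n ∈ Finset.Icc 1 N,
          (a n - 1) * (A ((N : ℤ) - n) - A ((N : ℤ) - n - 1)) := by
  intro N hN
  have hN0 : (N : ℝ) ≠ 0 := by positivity
  have h1 : (N : ℝ) * A N = ∑ n ∈ Finset.Icc 1 N, a n * A ((N : ℤ) - n) := by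
    rw [hrec N hN]; field_simp
  have h2 : (N : ℝ) * A ((N : ℤ) - 1)
      = (∑ n ∈ Finset.Icc 1 N, a n * A ((N : ℤ) - n - 1)) + A ((N : ℤ) - 1) := by
    rcases Nat.eq_or_lt_of_le hN with h | h
    · subst h
      simp [hAneg, hA0]
    · have hM : 1 ≤ N - 1 := by omega
      have hrecM := hrec (N - 1) hM
      have hcast : ((N - 1 : ℕ) : ℤ) = (N : ℤ) - 1 := by
        push_cast [Nat.cast_sub (by omega : 1 ≤ N)]; ring
      have hM0 : ((N : ℝ) - 1) ≠ 0 := by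
        have : (1 : ℝ) < N := by exact_mod_cast h
        linarith
      have hNN : N - 1 + 1 = N := by omega
      have hMr : ((N : ℝ) - 1) * A ((N : ℤ) - 1)
          = ∑ n ∈ Finset.Icc 1 (N - 1), a n * A ((N : ℤ) - 1 - n) := by
        rw [hcast] at hrecM
        rw [hrecM]
        field_simp
        rw [Nat.cast_sub (by omega : 1 ≤ N), Nat.cast_one]
      have hext : ∑ n ∈ Finset.Icc 1 (N - 1), a n * A ((N : ℤ) - 1 - n)
          = ∑ n ∈ Finset.Icc 1 N, a n * A ((N : ℤ) - n - 1) := by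
        conv_rhs => rw [← hNN]
        rw [Finset.sum_Icc_succ_top (by omega : 1 ≤ N - 1 + 1)]
        have hcN : ((N - 1 + 1 : ℕ) : ℤ) = (N : ℤ) := by rw [hNN]
        have hz : A (((N - 1 + 1 : ℕ) : ℤ) - ((N - 1 + 1 : ℕ) : ℤ) - 1) = 0 := by
          rw [show (((N - 1 + 1 : ℕ) : ℤ) - ((N - 1 + 1 : ℕ) : ℤ) - 1) = -1 by ring, hAneg]
        rw [hz, mul_zero, add_zero]
        apply Finset.sum_congr rfl
        intro n _
        simp only [hcN]
        congr 2
        ring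
      rw [hext] at hMr
      linarith [hMr]
  have htel : ∑ n ∈ Finset.Icc 1 N, (A ((N : ℤ) - n) - A ((N : ℤ) - n - 1))
      = A ((N : ℤ) - 1) := by
    have hts := Finset.sum_range_sub' (fun k => A ((N : ℤ) - 1 - k)) N
    rw [← Finset.Ico_add_one_right_eq_Icc, Finset.sum_Ico_eq_sum_range,
      show N + 1 - 1 = N from rfl]
    calc ∑ k ∈ Finset.range N, (A ((N : ℤ) - (1 + k : ℕ)) - A ((N : ℤ) - (1 + k : ℕ) - 1))
        = ∑ k ∈ Finset.range N, ((fun k : ℕ => A ((N : ℤ) - 1 - k)) k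
            - (fun k : ℕ => A ((N : ℤ) - 1 - k)) (k + 1)) := by
          apply Finset.sum_congr rfl
          intro k _
          simp only
          congr 2 <;> push_cast <;> ring
      _ = A ((N : ℤ) - 1 - (0 : ℕ)) - A ((N : ℤ) - 1 - (N : ℕ)) := hts
      _ = A ((N : ℤ) - 1) := by
          rw [show ((N : ℤ) - 1 - (N : ℕ)) = -1 by push_cast; ring, hAneg]
          simp
  have key : (N : ℝ) * (A N - A ((N : ℤ) - 1))
      = ∑ n ∈ Finset.Icc 1 N, (a n - 1) * (A ((N : ℤ) - n) - A ((N : ℤ) - n - 1)) := by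
    have expand : ∑ n ∈ Finset.Icc 1 N, (a n - 1) * (A ((N : ℤ) - n) - A ((N : ℤ) - n - 1))
        = (∑ n ∈ Finset.Icc 1 N, a n * A ((N : ℤ) - n))
          - (∑ n ∈ Finset.Icc 1 N, a n * A ((N : ℤ) - n - 1))
          - ∑ n ∈ Finset.Icc 1 N, (A ((N : ℤ) - n) - A ((N : ℤ) - n - 1)) := by
      rw [← Finset.sum_sub_distrib, ← Finset.sum_sub_distrib]
      apply Finset.sum_congr rfl
      intro n _
      ring
    rw [expand, htel, ← h1]
    linarith [h2]
  field_simp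
  linarith [key]
end

section
/- Let A_{-1}=0, A_0=1, and suppose a_n > 1 for all n ≥ 1. If A_N = (1/N)·∑_{n=1}^{N} a_n·A_{N-n} for all N ≥ 1, then the sequence (A_N) is strictly increasing: A_N > A_{N-1} for all N ≥ 1. -/
/-- If `a_n > 1` for all `n ≥ 1`, the sequence defined by
`A_N = (1/N) ∑_{n=1}^N a_n A_{N-n}` (with `A_{-1}=0`, `A_0=1`) is strictly increasing. -/
theorem stmt_1 (a : ℕ → ℝ) (A : ℤ → ℝ)
    (hAneg : A (-1) = 0) (hA0 : A 0 = 1)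
    (ha : ∀ n : ℕ, 1 ≤ n → 1 < a n)
    (hrec : ∀ N : ℕ, 1 ≤ N →
      A N = (1 / (N : ℝ)) * ∑ n ∈ Finset.Icc 1 N, a n * A ((N : ℤ) - n)) :
    ∀ N : ℕ, 1 ≤ N → A ((N : ℤ) - 1) < A N := by
  intro N
  induction N using Nat.strong_induction_on with
  | _ N IH =>
  intro hN
  have hNR : (0:ℝ) < N := by exact_mod_cast hN
  -- N * A N = sum
  have hS1 : (N:ℝ) * A N = ∑ n ∈ Finset.Icc 1 N, a n * A ((N : ℤ) - n) := by
    rw [hrec N hN]; field_simp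
  -- (N-1) * A (N-1) = sum over Icc 1 (N-1), shifted
  have hS2 : ((N:ℝ) - 1) * A ((N:ℤ) - 1)
      = ∑ n ∈ Finset.Icc 1 (N-1), a n * A ((N : ℤ) - n - 1) := by
    rcases Nat.lt_or_ge N 2 with h2 | h2
    · interval_cases N
      simp
    · have h1 : 1 ≤ N - 1 := by omega
      have := hrec (N-1) h1
      have hcast : ((N-1 : ℕ) : ℝ) = (N:ℝ) - 1 := by
        push_cast [Nat.cast_sub (by omega : 1 ≤ N)]; ring
      have hcastZ : ((N-1 : ℕ) : ℤ) = (N:ℤ) - 1 := by omega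
      rw [hcastZ, hcast] at this
      have hne : ((N:ℝ) - 1) ≠ 0 := by
        have : (2:ℝ) ≤ N := by exact_mod_cast h2
        nlinarith
      rw [this, ← mul_assoc, mul_one_div_cancel hne, one_mul]
      apply Finset.sum_congr rfl
      intro n hn
      congr 1
      ring_nf
  -- extend hS2 sum to Icc 1 N (extra term is a N * A (-1) = 0)
  have hS2' : ((N:ℝ) - 1) * A ((N:ℤ) - 1)
      = ∑ n ∈ Finset.Icc 1 N, a n * A ((N : ℤ) - n - 1) := by
    rw [hS2]
    have : Finset.Icc 1 N = insert N (Finset.Icc 1 (N-1)) := by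
      ext x; simp [Finset.mem_Icc]; omega
    rw [this, Finset.sum_insert (by simp [Finset.mem_Icc]; omega)]
    have : (N:ℤ) - N - 1 = -1 := by ring
    rw [this, hAneg]
    ring
  -- telescoping
  have htel : A ((N:ℤ) - 1) = ∑ n ∈ Finset.Icc 1 N, (A ((N:ℤ) - n) - A ((N:ℤ) - n - 1)) := by
    have hIcc : Finset.Icc 1 N = Finset.Ico 1 (N+1) := by
      ext x; simp [Finset.mem_Icc, Finset.mem_Ico]
    rw [hIcc, Finset.sum_Ico_eq_sum_range]
    have hEq : ∀ k ∈ Finset.range (N + 1 - 1),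
        A ((N:ℤ) - (1 + k : ℕ)) - A ((N:ℤ) - (1 + k : ℕ) - 1)
        = (fun i : ℕ => A ((N:ℤ) - 1 - i)) k - (fun i : ℕ => A ((N:ℤ) - 1 - i)) (k+1) := by
      intro k _
      simp only
      push_cast
      ring_nf
    rw [Finset.sum_congr rfl hEq, Finset.sum_range_sub' (fun i : ℕ => A ((N:ℤ) - 1 - i))]
    have h2 : (N:ℤ) - 1 - ((N + 1 - 1 : ℕ) : ℤ) = -1 := by push_cast; omega
    rw [h2, hAneg]
    norm_num
  -- key identity
  have key : (N:ℝ) * (A N - A ((N:ℤ) - 1))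
      = ∑ n ∈ Finset.Icc 1 N, (a n - 1) * (A ((N:ℤ) - n) - A ((N:ℤ) - n - 1)) := by
    have : (N:ℝ) * (A N - A ((N:ℤ) - 1))
        = (N:ℝ) * A N - ((N:ℝ) - 1) * A ((N:ℤ) - 1) - A ((N:ℤ) - 1) := by ring
    rw [this, hS1, hS2', htel, ← Finset.sum_sub_distrib, ← Finset.sum_sub_distrib]
    apply Finset.sum_congr rfl
    intro n _
    ring
  -- positivity of the sum
  have hpos : 0 < ∑ n ∈ Finset.Icc 1 N, (a n - 1) * (A ((N:ℤ) - n) - A ((N:ℤ) - n - 1)) := by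
    apply Finset.sum_pos
    · intro n hn
      rw [Finset.mem_Icc] at hn
      have h1 := ha n hn.1
      have hA : 0 < A ((N:ℤ) - n) - A ((N:ℤ) - n - 1) := by
        rcases eq_or_lt_of_le hn.2 with heq | hlt
        · rw [heq]
          have e1 : (N:ℤ) - N = 0 := by ring
          rw [e1]
          norm_num [hA0, hAneg]
        · have h3 := IH (N - n) (by omega) (by omega)
          have e1 : ((N - n : ℕ) : ℤ) = (N:ℤ) - n := by omega
          rw [e1] at h3
          have e2 : (N:ℤ) - n - 1 = (N:ℤ) - n - 1 := rfl
          linarith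
      nlinarith
    · exact Finset.nonempty_Icc.mpr hN
  nlinarith [key, hpos]
end

section
/- For every β > 0 and every x ∈ ℤ^d, the lattice Brownian-bridge weight ∫ P^β_{0x}(dω) = (e^{−2dβ}/π^d)·∏_{j=1}^d ∫_0^π e^{2β cos k}·cos(k x_j) dk is strictly positive. -/
open Real MeasureTheory intervalIntegral

noncomputable def cc (m n : ℕ) : ℝ :=
  ∫ k in (0:ℝ)..Real.pi, Real.cos k ^ m * Real.cos (n * k)

lemma cc_cont (m n : ℕ) : Continuous fun k : ℝ => Real.cos k ^ m * Real.cos (n * k) := by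
  continuity

lemma cc_zero_zero : cc 0 0 = Real.pi := by
  simp [cc]

lemma cc_zero (n : ℕ) (hn : n ≠ 0) : cc 0 n = 0 := by
  have hne : (n : ℝ) ≠ 0 := Nat.cast_ne_zero.mpr hn
  simp only [cc, pow_zero, one_mul]
  rw [intervalIntegral.integral_comp_mul_left Real.cos hne]
  simp [Real.sin_nat_mul_pi]

lemma cc_rec0 (m : ℕ) : cc (m+1) 0 = cc m 1 := by
  unfold cc
  apply intervalIntegral.integral_congr
  intro k _
  simp [pow_succ, mul_comm]

lemma cc_rec (m n : ℕ) : cc (m+1) (n+1) = (cc m (n+2) + cc m n) / 2 := by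
  have h : ∀ k : ℝ, Real.cos k ^ (m+1) * Real.cos ((n+1 : ℕ) * k)
      = (Real.cos k ^ m * Real.cos ((n+2 : ℕ) * k) + Real.cos k ^ m * Real.cos ((n : ℕ) * k)) / 2 := by
    intro k
    have h2 : 2 * Real.cos k * Real.cos ((n+1 : ℕ) * k)
        = Real.cos (k - (n+1 : ℕ) * k) + Real.cos (k + (n+1 : ℕ) * k) :=
      Real.two_mul_cos_mul_cos k ((n+1 : ℕ) * k)
    have e1 : Real.cos (k - (n+1 : ℕ) * k) = Real.cos ((n : ℕ) * k) := by
      rw [show k - (n+1 : ℕ) * k = -((n:ℕ) * k) by push_cast; ring, Real.cos_neg]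
    have e2 : Real.cos (k + (n+1 : ℕ) * k) = Real.cos ((n+2 : ℕ) * k) := by
      congr 1; push_cast; ring
    rw [e1, e2] at h2
    rw [pow_succ]
    linear_combination (Real.cos k ^ m / 2) * h2
  unfold cc
  rw [intervalIntegral.integral_congr (g := fun k =>
    (Real.cos k ^ m * Real.cos ((n+2 : ℕ) * k) + Real.cos k ^ m * Real.cos ((n : ℕ) * k)) / 2)
    (fun k _ => h k)]
  rw [intervalIntegral.integral_div, intervalIntegral.integral_add
    ((cc_cont m (n+2)).intervalIntegrable _ _) ((cc_cont m n).intervalIntegrable _ _)]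

lemma cc_nonneg : ∀ m n, 0 ≤ cc m n := by
  intro m
  induction m with
  | zero =>
    intro n
    rcases Nat.eq_zero_or_pos n with h | h
    · rw [h, cc_zero_zero]; exact Real.pi_pos.le
    · rw [cc_zero n h.ne']
  | succ m ih =>
    intro n
    cases n with
    | zero => rw [cc_rec0]; exact ih 1
    | succ n =>
      rw [cc_rec]
      have h1 := ih (n+2)
      have h2 := ih n
      linarith

lemma cc_diag_pos : ∀ n, 0 < cc n n := by
  intro n
  induction n with
  | zero => rw [cc_zero_zero]; exact Real.pi_pos
  | succ n ih =>
    rw [cc_rec]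
    have := cc_nonneg n (n+2)
    linarith

lemma key_pos (β : ℝ) (hβ : 0 < β) (n : ℕ) :
    0 < ∫ k in (0:ℝ)..Real.pi, Real.exp (2 * β * Real.cos k) * Real.cos (n * k) := by
  set F : ℕ → ℝ → ℝ :=
    fun m k => (2*β)^m / m.factorial * (Real.cos k ^ m * Real.cos (n * k)) with hF
  have hcont : ∀ m, Continuous (F m) := fun m => continuous_const.mul (cc_cont m n)
  have hptw : ∀ k : ℝ, (∑' m, F m k) = Real.exp (2 * β * Real.cos k) * Real.cos (n * k) := by
    intro k
    have h1 : Real.exp (2*β*Real.cos k) = ∑' m, (2*β*Real.cos k)^m / m.factorial := by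
      rw [Real.exp_eq_exp_ℝ, NormedSpace.exp_eq_tsum_div]
    rw [h1, ← tsum_mul_right]
    congr 1; funext m; rw [mul_pow]; ring
  have hint : ∀ m, IntegrableOn (F m) (Set.Ioc (0:ℝ) Real.pi) volume :=
    fun m => (hcont m).integrableOn_Ioc
  have hcoef : ∀ m : ℕ, 0 ≤ (2*β)^m / m.factorial := by
    intro m; positivity
  have hbound : ∀ m, (∫ k in Set.Ioc (0:ℝ) Real.pi, ‖F m k‖) ≤ (2*β)^m / m.factorial * Real.pi := by
    intro m
    have h1 : ∀ k ∈ Set.Ioc (0:ℝ) Real.pi, ‖F m k‖ ≤ (2*β)^m / m.factorial := by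
      intro k _
      rw [hF]
      rw [norm_mul, Real.norm_eq_abs, Real.norm_eq_abs, abs_of_nonneg (hcoef m)]
      have : |Real.cos k ^ m * Real.cos (n * k)| ≤ 1 := by
        rw [abs_mul, abs_pow]
        exact mul_le_one₀ (pow_le_one₀ (abs_nonneg _) (Real.abs_cos_le_one k))
          (abs_nonneg _) (Real.abs_cos_le_one _)
      calc (2*β)^m / m.factorial * |Real.cos k ^ m * Real.cos (n * k)|
          ≤ (2*β)^m / m.factorial * 1 := by
            exact mul_le_mul_of_nonneg_left this (hcoef m)
        _ = (2*β)^m / m.factorial := mul_one _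
    calc (∫ k in Set.Ioc (0:ℝ) Real.pi, ‖F m k‖)
        ≤ ∫ _ in Set.Ioc (0:ℝ) Real.pi, (2*β)^m / m.factorial := by
          apply setIntegral_mono_on (hint m).norm ((integrableOn_const_iff).mpr (Or.inr ?_))
            measurableSet_Ioc h1
          rw [Real.volume_Ioc]
          exact ENNReal.ofReal_lt_top
      _ = (2*β)^m / m.factorial * Real.pi := by
          rw [setIntegral_const, Real.volume_real_Ioc_of_le Real.pi_pos.le, smul_eq_mul, sub_zero,
            mul_comm]
  have hsum : Summable fun m => ∫ k in Set.Ioc (0:ℝ) Real.pi, ‖F m k‖ := by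
    apply Summable.of_nonneg_of_le (fun m => integral_nonneg fun k => norm_nonneg _) hbound
    exact (Real.summable_pow_div_factorial (2*β)).mul_right Real.pi
  have hs := MeasureTheory.hasSum_integral_of_summable_integral_norm
    (μ := volume.restrict (Set.Ioc (0:ℝ) Real.pi)) (F := F) hint hsum
  have heval : ∀ m, (∫ k in Set.Ioc (0:ℝ) Real.pi, F m k) = (2*β)^m / m.factorial * cc m n := by
    intro m
    rw [← intervalIntegral.integral_of_le Real.pi_pos.le]
    rw [hF]
    simp only
    rw [intervalIntegral.integral_const_mul, cc]
  have hEq : (∫ k in Set.Ioc (0:ℝ) Real.pi, ∑' m, F m k)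
      = ∫ k in (0:ℝ)..Real.pi, Real.exp (2 * β * Real.cos k) * Real.cos (n * k) := by
    rw [← intervalIntegral.integral_of_le Real.pi_pos.le]
    exact intervalIntegral.integral_congr fun k _ => hptw k
  rw [← hEq]
  have hterm : (2*β)^n / n.factorial * cc n n
      ≤ ∫ k in Set.Ioc (0:ℝ) Real.pi, ∑' m, F m k := by
    rw [← heval n]
    exact le_hasSum hs n fun m _ => by rw [heval m]; exact mul_nonneg (hcoef m) (cc_nonneg m n)
  have : 0 < (2*β)^n / n.factorial * cc n n := by
    apply mul_pos _ (cc_diag_pos n)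
    positivity
  linarith

/-- Positivity of the lattice Brownian-bridge weight
`⟨x|e^{βΔ}|0⟩ = (e^{−2dβ}/π^d) ∏_j ∫_0^π e^{2β cos k} cos(k x_j) dk` on `ℤ^d`. -/
theorem stmt_9 (d : ℕ) (β : ℝ) (hβ : 0 < β) (x : Fin d → ℤ) :
    0 < (Real.exp (-2 * d * β) / Real.pi ^ d) *
      ∏ j : Fin d, ∫ k in (0 : ℝ)..Real.pi,
        Real.exp (2 * β * Real.cos k) * Real.cos (k * (x j : ℝ)) := by
  apply mul_pos
  · exact div_pos (Real.exp_pos _) (pow_pos Real.pi_pos d)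
  · apply Finset.prod_pos
    intro j _
    have hc : ∀ k : ℝ, Real.cos (k * (x j : ℝ)) = Real.cos (((x j).natAbs : ℝ) * k) := by
      intro k
      have h0 : ((x j : ℝ)) = ((x j).natAbs : ℝ) ∨ ((x j : ℝ)) = -(((x j).natAbs : ℝ)) := by
        rw [Nat.cast_natAbs]; push_cast [Int.cast_abs]
        rcases abs_choice ((x j : ℝ)) with h | h
        · left; linarith
        · right; linarith
      rcases h0 with h | h
      · rw [h, mul_comm]
      · rw [h, show k * -(((x j).natAbs : ℝ)) = -(((x j).natAbs : ℝ) * k) by ring, Real.cos_neg]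
    rw [intervalIntegral.integral_congr (g := fun k =>
      Real.exp (2 * β * Real.cos k) * Real.cos (((x j).natAbs : ℝ) * k))
      (fun k _ => by rw [hc k])]
    exact key_pos β hβ (x j).natAbs
end
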